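/- Let 𝓔_X be a ballean on X and 𝓔_Y a ballean on Y, both unbounded, with cov(𝓑_X) < add(𝓑_Y), and assume the bornology 𝓑_X is tall (every infinite subset of X has an infinite bounded subset). If X and Y are both emu-bounded, then the product ballean on X × Y is emu-bounded. -/

import Mathlib

universe u

/-- A ballean on a set `X`: a family of entourages containing the diagonal,
closed (up to enlargement) under `E ∘ F⁻¹`, and covering `X × X`. -/
structure Ballean (X : Type*) where
  ent : Set (Set (X × X))
  diag : ∀ E ∈ ent, ∀ x : X, (x, x) ∈ E
  comp : ∀ E ∈ ent, ∀ F ∈ ent, ∃ D ∈ ent,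
    ∀ x z : X, (∃ y : X, (x, y) ∈ E ∧ (z, y) ∈ F) → (x, z) ∈ D
  cover : ∀ x y : X, ∃ E ∈ ent, (x, y) ∈ E

/-- The ball `E[x] = {y : (x,y) ∈ E}`. -/
def ball {X : Type*} (E : Set (X × X)) (x : X) : Set X := {y | (x, y) ∈ E}

/-- A set is bounded in a ballean if it is contained in some ball. -/
def Ballean.Bdd {X : Type*} (B : Ballean X) (S : Set X) : Prop :=
  ∃ E ∈ B.ent, ∃ x : X, S ⊆ ball E x

/-- `cof 𝓑`: minimal cardinality of a cofinal subfamily of `𝓑`. -/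
noncomputable def bornCof {X : Type u} (𝓑 : Set (Set X)) : Cardinal.{u} :=
  sInf {c : Cardinal.{u} | ∃ 𝓐 : Set (Set X), 𝓐 ⊆ 𝓑 ∧ Cardinal.mk 𝓐 = c ∧
    ∀ B ∈ 𝓑, ∃ A ∈ 𝓐, B ⊆ A}

/-- `non 𝓑`: minimal cardinality of a subset of `X` not in `𝓑`. -/
noncomputable def bornNon {X : Type u} (𝓑 : Set (Set X)) : Cardinal.{u} :=
  sInf {c : Cardinal.{u} | ∃ A : Set X, A ∉ 𝓑 ∧ Cardinal.mk A = c}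

/-- `cov 𝓑`: minimal cardinality of a subfamily of `𝓑` covering `X`. -/
noncomputable def bornCov {X : Type u} (𝓑 : Set (Set X)) : Cardinal.{u} :=
  sInf {c : Cardinal.{u} | ∃ 𝓐 : Set (Set X), 𝓐 ⊆ 𝓑 ∧ Cardinal.mk 𝓐 = c ∧
    ⋃₀ 𝓐 = Set.univ}

/-- `add 𝓑`: minimal cardinality of a subfamily of `𝓑` whose union is not in `𝓑`. -/
noncomputable def bornAdd {X : Type u} (𝓑 : Set (Set X)) : Cardinal.{u} :=
  sInf {c : Cardinal.{u} | ∃ 𝓐 : Set (Set X), 𝓐 ⊆ 𝓑 ∧ Cardinal.mk 𝓐 = c ∧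
    ⋃₀ 𝓐 ∉ 𝓑}

/-- A ballean is emu-bounded if every eventually macro-uniform `f : X → ℝ` is
bounded outside some bounded set. -/
def Ballean.EmuBounded {X : Type*} (B : Ballean X) : Prop :=
  ∀ f : X → ℝ,
    (∀ E ∈ B.ent, ∃ S : Set X, B.Bdd S ∧ ∃ C : ℝ,
      ∀ x ∉ S, ∀ a ∈ ball E x, ∀ b ∈ ball E x, |f a - f b| ≤ C) →
    ∃ S : Set X, B.Bdd S ∧ ∃ C : ℝ, ∀ x ∉ S, |f x| ≤ C

namespace BalleanAux

variable {Z : Type*} (B : Ballean Z)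

lemma inv_mem {F : Set (Z × Z)} (hF : F ∈ B.ent) :
    ∃ D ∈ B.ent, ∀ a b : Z, (a, b) ∈ F → (b, a) ∈ D := by
  obtain ⟨D, hD, hp⟩ := B.comp F hF F hF
  exact ⟨D, hD, fun a b hab => hp b a ⟨b, B.diag F hF b, hab⟩⟩

lemma union_mem {E F : Set (Z × Z)} (hE : E ∈ B.ent) (hF : F ∈ B.ent) :
    ∃ D ∈ B.ent, E ⊆ D ∧ F ⊆ D := by
  obtain ⟨F₁, hF₁, hinv⟩ := inv_mem B hF
  obtain ⟨D, hD, hp⟩ := B.comp E hE F₁ hF₁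
  refine ⟨D, hD, ?_, ?_⟩
  · rintro ⟨x, z⟩ hxz
    exact hp x z ⟨z, hxz, B.diag F₁ hF₁ z⟩
  · rintro ⟨x, z⟩ hxz
    exact hp x z ⟨x, B.diag E hE x, hinv x z hxz⟩

lemma bdd_union {A A' : Set Z} (hA : B.Bdd A) (hA' : B.Bdd A') : B.Bdd (A ∪ A') := by
  obtain ⟨E, hE, x, hx⟩ := hA
  obtain ⟨F, hF, x', hx'⟩ := hA'
  obtain ⟨G, hG, hGx⟩ := B.cover x x'
  obtain ⟨F₁, hF₁, hinv⟩ := inv_mem B hF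
  obtain ⟨D₁, hD₁, hp⟩ := B.comp G hG F₁ hF₁
  obtain ⟨K, hK, hEK, hDK⟩ := union_mem B hE hD₁
  refine ⟨K, hK, x, ?_⟩
  rintro z (hz | hz)
  · exact hEK (hx hz)
  · exact hDK (hp x z ⟨x', hGx, hinv x' z (hx' hz)⟩)

lemma bdd_enlarge {W : Set Z} {E : Set (Z × Z)} (hW : B.Bdd W) (hE : E ∈ B.ent) :
    B.Bdd {x | ∃ z ∈ W, (x, z) ∈ E} := by
  obtain ⟨G, hG, x₀, hx₀⟩ := hW
  obtain ⟨D, hD, hp⟩ := B.comp G hG E hE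
  refine ⟨D, hD, x₀, ?_⟩
  rintro x ⟨z, hzW, hxz⟩
  exact hp x₀ x ⟨z, hx₀ hzW, hxz⟩

lemma bdd_singleton (x : Z) : B.Bdd {x} := by
  obtain ⟨E, hE, hxx⟩ := B.cover x x
  refine ⟨E, hE, x, ?_⟩
  intro z hz
  rw [Set.mem_singleton_iff] at hz
  subst hz
  exact hxx

end BalleanAux

lemma bornAdd_le_of {X : Type u} (𝓑 : Set (Set X)) (𝓐 : Set (Set X)) (h1 : 𝓐 ⊆ 𝓑)
    (h2 : ⋃₀ 𝓐 ∉ 𝓑) : bornAdd 𝓑 ≤ Cardinal.mk 𝓐 :=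
  csInf_le' ⟨𝓐, h1, rfl, h2⟩

lemma bornCov_spec {X : Type u} (𝓑 : Set (Set X))
    (hne : ∃ 𝓐 : Set (Set X), 𝓐 ⊆ 𝓑 ∧ ⋃₀ 𝓐 = Set.univ) :
    ∃ 𝓐 : Set (Set X), 𝓐 ⊆ 𝓑 ∧ Cardinal.mk 𝓐 = bornCov 𝓑 ∧ ⋃₀ 𝓐 = Set.univ := by
  obtain ⟨𝓐₀, h1, h2⟩ := hne
  have hmem : bornCov 𝓑 ∈ {c : Cardinal.{u} | ∃ 𝓐 : Set (Set X), 𝓐 ⊆ 𝓑 ∧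
      Cardinal.mk 𝓐 = c ∧ ⋃₀ 𝓐 = Set.univ} :=
    csInf_mem ⟨_, 𝓐₀, h1, rfl, h2⟩
  exact hmem

/-- If `X`, `Y` are unbounded emu-bounded balleans with `cov 𝓑_X < add 𝓑_Y`
and tall bornology `𝓑_X`, then the product ballean on `X × Y` is emu-bounded. -/
theorem prod_emuBounded_of_cov_lt_add_tall {X Y : Type u} (BX : Ballean X) (BY : Ballean Y)
    (hXu : ¬ BX.Bdd Set.univ) (hYu : ¬ BY.Bdd Set.univ)
    (hcard : bornCov {S : Set X | BX.Bdd S} < bornAdd {T : Set Y | BY.Bdd T})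
    (htall : ∀ A : Set X, A.Infinite → ∃ C ⊆ A, C.Infinite ∧ BX.Bdd C)
    (hXemu : BX.EmuBounded) (hYemu : BY.EmuBounded) :
    ∀ f : X × Y → ℝ,
      (∀ E ∈ BX.ent, ∀ F ∈ BY.ent,
        ∃ (S : Set X) (T : Set Y), BX.Bdd S ∧ BY.Bdd T ∧ ∃ C : ℝ,
          ∀ p : X × Y, p ∉ S ×ˢ T →
            ∀ a ∈ (ball E p.1) ×ˢ (ball F p.2), ∀ b ∈ (ball E p.1) ×ˢ (ball F p.2),
              |f a - f b| ≤ C) →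
      ∃ (S : Set X) (T : Set Y), BX.Bdd S ∧ BY.Bdd T ∧
        ∃ C : ℝ, ∀ p : X × Y, p ∉ S ×ˢ T → |f p| ≤ C := by
  intro f hf
  -- Y is nonempty
  have hYne : Nonempty Y := by
    rcases isEmpty_or_nonempty Y with hY | hY
    · exfalso
      have h0 : bornAdd {T : Set Y | BY.Bdd T} ≤ Cardinal.mk (∅ : Set (Set Y)) := by
        apply bornAdd_le_of
        · exact Set.empty_subset _
        · rintro ⟨E, hE, y, -⟩
          exact hY.elim y
      rw [Cardinal.mk_emptyCollection] at h0
      exact absurd (hcard.trans_le h0) (not_lt.mpr (Cardinal.zero_le _))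
    · exact hY
  obtain ⟨ystar⟩ := hYne
  obtain ⟨Fstar, hFstar, -⟩ := BY.cover ystar ystar
  rcases isEmpty_or_nonempty X with hXe | hXne
  · -- X empty: derive a contradiction
    exfalso
    by_cases hent : ∃ E, E ∈ BX.ent
    · obtain ⟨E, hE⟩ := hent
      obtain ⟨S, T, hS, -⟩ := hf E hE Fstar hFstar
      obtain ⟨-, -, x, -⟩ := hS
      exact hXe.elim x
    · obtain ⟨S, hS, -⟩ := hXemu (fun _ => 0) (by
        intro E hE
        exact absurd ⟨E, hE⟩ hent)
      obtain ⟨-, -, x, -⟩ := hS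
      exact hXe.elim x
  obtain ⟨xstar⟩ := hXne
  -- every row is bounded outside a bounded set
  have hrow : ∀ x₀ : X, ∃ T, BY.Bdd T ∧ ∃ C, ∀ y ∉ T, |f (x₀, y)| ≤ C := by
    intro x₀
    apply hYemu (fun y => f (x₀, y))
    intro F hF
    obtain ⟨E, hE, -⟩ := BX.cover x₀ x₀
    obtain ⟨S, T, hS, hT, C, hC⟩ := hf E hE F hF
    refine ⟨T, hT, C, ?_⟩
    intro y hy a ha b hb
    exact hC (x₀, y) (fun hm => hy hm.2) (x₀, a)
      (Set.mk_mem_prod (BX.diag E hE x₀) ha) (x₀, b)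
      (Set.mk_mem_prod (BX.diag E hE x₀) hb)
  -- every column is bounded outside a bounded set
  have hcol : ∀ y₀ : Y, ∃ S, BX.Bdd S ∧ ∃ C, ∀ x ∉ S, |f (x, y₀)| ≤ C := by
    intro y₀
    apply hXemu (fun x => f (x, y₀))
    intro E hE
    obtain ⟨F, hF, -⟩ := BY.cover y₀ y₀
    obtain ⟨S, T, hS, hT, C, hC⟩ := hf E hE F hF
    refine ⟨S, hS, C, ?_⟩
    intro x hx a ha b hb
    exact hC (x, y₀) (fun hm => hx hm.1) (a, y₀)
      (Set.mk_mem_prod ha (BY.diag F hF y₀)) (b, y₀)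
      (Set.mk_mem_prod hb (BY.diag F hF y₀))
  -- horizontal strip lemma
  have hstrip : ∀ A : Set X, BX.Bdd A →
      ∃ T, BY.Bdd T ∧ ∃ C, ∀ x ∈ A, ∀ y ∉ T, |f (x, y)| ≤ C := by
    intro A hAbdd
    obtain ⟨E, hE, x₀, hA⟩ := hAbdd
    obtain ⟨T₀, hT₀, C₀, h₀⟩ := hrow x₀
    obtain ⟨S, T, hS, hT, C, hC⟩ := hf E hE Fstar hFstar
    refine ⟨T₀ ∪ T, BalleanAux.bdd_union BY hT₀ hT, C₀ + C, ?_⟩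
    intro x hx y hy
    have h1 := hC (x₀, y) (fun hm => hy (Or.inr hm.2)) (x, y)
      (Set.mk_mem_prod (hA hx) (BY.diag Fstar hFstar y)) (x₀, y)
      (Set.mk_mem_prod (BX.diag E hE x₀) (BY.diag Fstar hFstar y))
    have h2 := h₀ y (fun hm => hy (Or.inl hm))
    have h3 := abs_sub_abs_le_abs_sub (f (x, y)) (f (x₀, y))
    linarith
  -- vertical strip lemma
  have hstripY : ∀ T' : Set Y, BY.Bdd T' →
      ∃ S, BX.Bdd S ∧ ∃ C, ∀ y ∈ T', ∀ x ∉ S, |f (x, y)| ≤ C := by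
    intro T' hT'bdd
    obtain ⟨F, hF, y₀, hT'⟩ := hT'bdd
    obtain ⟨S₀, hS₀, D₀, h₀⟩ := hcol y₀
    obtain ⟨E₀, hE₀, -⟩ := BX.cover xstar xstar
    obtain ⟨S, T, hS, hT, C, hC⟩ := hf E₀ hE₀ F hF
    refine ⟨S₀ ∪ S, BalleanAux.bdd_union BX hS₀ hS, D₀ + C, ?_⟩
    intro y hy x hx
    have h1 := hC (x, y₀) (fun hm => hx (Or.inr hm.1)) (x, y)
      (Set.mk_mem_prod (BX.diag E₀ hE₀ x) (hT' hy)) (x, y₀)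
      (Set.mk_mem_prod (BX.diag E₀ hE₀ x) (BY.diag F hF y₀))
    have h2 := h₀ x (fun hm => hx (Or.inl hm))
    have h3 := abs_sub_abs_le_abs_sub (f (x, y)) (f (x, y₀))
    linarith
  -- a covering family of bounded sets of minimal cardinality
  obtain ⟨𝓐, h𝓐b, h𝓐mk, h𝓐cov⟩ := bornCov_spec {S : Set X | BX.Bdd S}
    ⟨{S : Set X | BX.Bdd S}, subset_rfl, by
      ext x
      simp only [Set.mem_sUnion, Set.mem_univ, iff_true]
      exact ⟨{x}, BalleanAux.bdd_singleton BX x, Set.mem_singleton x⟩⟩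
  choose Tfun hTfun Cfun hCfun using fun A : ↥𝓐 => hstrip (A : Set X) (h𝓐b A.2)
  set Tstar : Set Y := ⋃ A : ↥𝓐, Tfun A with hTstar_def
  have hTstar : BY.Bdd Tstar := by
    by_contra hcon
    have h1 : bornAdd {T : Set Y | BY.Bdd T} ≤ Cardinal.mk (Set.range Tfun) := by
      apply bornAdd_le_of
      · rintro T ⟨A, rfl⟩
        exact hTfun A
      · rw [Set.sUnion_range]
        exact hcon
    have h2 : Cardinal.mk (Set.range Tfun) ≤ Cardinal.mk ↥𝓐 := Cardinal.mk_range_le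
    rw [h𝓐mk] at h2
    exact absurd hcard (not_lt.mpr (h1.trans h2))
  have hxA : ∀ x : X, ∃ A : ↥𝓐, x ∈ (A : Set X) := by
    intro x
    have hx : x ∈ ⋃₀ 𝓐 := by rw [h𝓐cov]; exact Set.mem_univ x
    obtain ⟨A, hA, hxA⟩ := hx
    exact ⟨⟨A, hA⟩, hxA⟩
  -- the sup function φ
  have hcompl : Tstarᶜ.Nonempty :=
    Set.nonempty_compl.mpr (fun h => hYu (h ▸ hTstar))
  set φ : X → ℝ := fun x => sSup ((fun y => |f (x, y)|) '' Tstarᶜ) with hφ_def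
  have hbddabove : ∀ x : X, BddAbove ((fun y => |f (x, y)|) '' Tstarᶜ) := by
    intro x
    obtain ⟨A, hA⟩ := hxA x
    refine ⟨Cfun A, ?_⟩
    rintro r ⟨y, hy, rfl⟩
    exact hCfun A x hA y (fun hm => hy (Set.mem_iUnion_of_mem A hm))
  have hφge : ∀ x : X, ∀ y ∉ Tstar, |f (x, y)| ≤ φ x :=
    fun x y hy => le_csSup (hbddabove x) ⟨y, hy, rfl⟩
  have hφ0 : ∀ x : X, 0 ≤ φ x := by
    intro x
    obtain ⟨y, hy⟩ := hcompl
    exact (abs_nonneg _).trans (hφge x y hy)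
  have hφle : ∀ (x : X) (C' : ℝ), (∀ y ∉ Tstar, |f (x, y)| ≤ C') → φ x ≤ C' := by
    intro x C' h
    apply csSup_le (hcompl.image _)
    rintro r ⟨y, hy, rfl⟩
    exact h y hy
  -- φ is eventually macro-uniform
  have hφemu : ∀ E ∈ BX.ent, ∃ S', BX.Bdd S' ∧ ∃ C', ∀ x ∉ S',
      ∀ a ∈ ball E x, ∀ b ∈ ball E x, |φ a - φ b| ≤ C' := by
    intro E hE
    obtain ⟨S, T, hS, hT, C, hC⟩ := hf E hE Fstar hFstar
    obtain ⟨S_T, hS_T, C_T, hC_T⟩ := hstripY T hT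
    refine ⟨{x | ∃ z ∈ S ∪ S_T, (x, z) ∈ E},
      BalleanAux.bdd_enlarge BX (BalleanAux.bdd_union BX hS hS_T) hE, max C C_T, ?_⟩
    intro x hx a ha b hb
    have hnot : ∀ c ∈ ball E x, c ∉ S ∪ S_T := fun c hc hcW => hx ⟨c, hcW, hc⟩
    have key : ∀ c ∈ ball E x, ∀ d ∈ ball E x, φ c ≤ max (φ d + C) C_T := by
      intro c hc d hd
      apply hφle
      intro y hy
      by_cases hyT : y ∈ T
      · exact le_trans (hC_T y hyT c (fun hm => hnot c hc (Or.inr hm))) (le_max_right _ _)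
      · have hxS : x ∉ S := fun hm => hnot x (BX.diag E hE x) (Or.inl hm)
        have h1 := hC (x, y) (fun hm => hxS hm.1) (c, y)
          (Set.mk_mem_prod hc (BY.diag Fstar hFstar y)) (d, y)
          (Set.mk_mem_prod hd (BY.diag Fstar hFstar y))
        have h2 := hφge d y hy
        have h3 := abs_sub_abs_le_abs_sub (f (c, y)) (f (d, y))
        have h4 : |f (c, y)| ≤ φ d + C := by linarith
        exact le_trans h4 (le_max_left _ _)
    have h1 := key a ha b hb
    have h2 := key b hb a ha
    have h0a := hφ0 a
    have h0b := hφ0 b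
    have hmax : ∀ w : ℝ, 0 ≤ w → max (w + C) C_T ≤ w + max C C_T := by
      intro w hw
      apply max_le
      · exact add_le_add (le_refl w) (le_max_left _ _)
      · exact le_add_of_nonneg_of_le hw (le_max_right _ _)
    have hma := hmax (φ a) h0a
    have hmb := hmax (φ b) h0b
    rw [abs_sub_le_iff]
    constructor
    · linarith
    · linarith
  -- finish
  obtain ⟨S₀, hS₀, C₂, hC₂⟩ := hXemu φ hφemu
  obtain ⟨S₁, hS₁, C₁, hC₁⟩ := hstripY Tstar hTstar
  obtain ⟨T_S, hT_S, C_S, hC_S⟩ := hstrip (S₀ ∪ S₁) (BalleanAux.bdd_union BX hS₀ hS₁)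
  refine ⟨S₀ ∪ S₁, Tstar ∪ T_S, BalleanAux.bdd_union BX hS₀ hS₁,
    BalleanAux.bdd_union BY hTstar hT_S, max (max C₂ C₁) C_S, ?_⟩
  rintro ⟨x, y⟩ hp
  by_cases hx : x ∈ S₀ ∪ S₁
  · have hy : y ∉ Tstar ∪ T_S := fun hm => hp (Set.mk_mem_prod hx hm)
    exact le_trans (hC_S x hx y (fun hm => hy (Or.inr hm))) (le_max_right _ _)
  · by_cases hy : y ∈ Tstar
    · exact le_trans (hC₁ y hy x (fun hm => hx (Or.inr hm)))
        ((le_max_right _ _).trans (le_max_left _ _))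
    · exact le_trans ((hφge x y hy).trans ((le_abs_self _).trans
        (hC₂ x (fun hm => hx (Or.inl hm)))))
        ((le_max_left _ _).trans (le_max_left _ _))
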